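/- For every WGP instance with m packets, the schedule produced by FIFO satisfies max_j F_j ≤ (1 + (γ/γ₀)·m) · max_j F*_j, where F*_j are the flow times in any feasible schedule; in particular FIFO is an O(m)-approximation for F-WGP. -/
import Mathlib


/-- An instance of the Wireless Gathering Problem. -/
structure WGPInstance (V J : Type*) where
  /-- the communication graph -/
  G : SimpleGraph V
  /-- the sink -/
  s : V
  /-- the interference radius -/
  dI : ℕ
  /-- origins of the packets -/
  o : J → V
  /-- release dates of the packets -/
  r : J → ℕ

namespace WGPInstance

variable {V J : Type*}

/-- Two calls `(u,v)` and `(u',v')` occurring in the same round interfere if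
`d(u',v) ≤ d_I` or `d(u,v') ≤ d_I`. -/
def Interferes (I : WGPInstance V J) (u v u' v' : V) : Prop :=
  I.G.edist u' v ≤ I.dI ∨ I.G.edist u v' ≤ I.dI

/-- A feasible (unit-speed) schedule: `x j t` is the node holding packet `j` at round `t`.
Packets sit at their origin until their release date, move along edges of `G`
(the transition from `x j t` to `x j (t+1)` being a call of round `t`), calls of a round
are pairwise non-interfering and have distinct senders, and every packet reaches the sink. -/
def Feasible (I : WGPInstance V J) (x : J → ℕ → V) : Prop :=
  (∀ j t, t ≤ I.r j → x j t = I.o j) ∧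
  (∀ j t, x j (t + 1) = x j t ∨ I.G.Adj (x j t) (x j (t + 1))) ∧
  (∀ j k t, j ≠ k → x j (t + 1) ≠ x j t → x k (t + 1) ≠ x k t →
    x j t ≠ x k t ∧ ¬ I.Interferes (x j t) (x j (t + 1)) (x k t) (x k (t + 1))) ∧
  (∀ j, ∃ t, x j t = I.s)

/-- The completion time of packet `j`: the first round `t ≥ r_j` with `x j t = s`. -/
noncomputable def completion (I : WGPInstance V J) (x : J → ℕ → V) (j : J) : ℕ :=
  sInf {t | I.r j ≤ t ∧ x j t = I.s}

/-- The flow time of packet `j`: `F_j = C_j - r_j`. -/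
noncomputable def flow (I : WGPInstance V J) (x : J → ℕ → V) (j : J) : ℕ :=
  I.completion x j - I.r j

/-- Packet `j` is available (active) at round `t` if it has been released and
has not yet reached the sink. -/
def Active (I : WGPInstance V J) (x : J → ℕ → V) (j : J) (t : ℕ) : Prop :=
  I.r j ≤ t ∧ x j t ≠ I.s

/-- `x` is a schedule that a Priority Greedy algorithm with priority function `prio`
(lower `prio`-value = higher priority) may produce: packets that reached the sink stay
there; every call moves an active packet one step along a shortest path to the sink;
and an active packet is left in place only if every such shortest-path step would
interfere with the call of some higher-priority packet of that round. -/
def PriorityGreedy (I : WGPInstance V J) (prio : J → ℕ) (x : J → ℕ → V) : Prop :=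
  Function.Injective prio ∧
  (∀ j t, x j t = I.s → x j (t + 1) = I.s) ∧
  (∀ j t, x j (t + 1) ≠ x j t →
    I.Active x j t ∧ I.G.dist (x j (t + 1)) I.s + 1 = I.G.dist (x j t) I.s) ∧
  (∀ j t, I.Active x j t → x j (t + 1) = x j t →
    ∀ v, I.G.Adj (x j t) v → I.G.dist v I.s + 1 = I.G.dist (x j t) I.s →
      ∃ k, prio k < prio j ∧ x k (t + 1) ≠ x k t ∧
        I.Interferes (x j t) v (x k t) (x k (t + 1)))

/-- FIFO is the Priority Greedy algorithm in which packets with earlier release dates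
have higher priority (ties broken arbitrarily). -/
def FIFO (I : WGPInstance V J) (x : J → ℕ → V) : Prop :=
  ∃ prio : J → ℕ, (∀ j k, I.r j < I.r k → prio j < prio k) ∧ I.PriorityGreedy prio x

end WGPInstance

section Aux

open Finset in
lemma count_drops {f : ℕ → ℕ} {P : ℕ → Prop} [DecidablePred P]
    (h1 : ∀ t, P t → f (t + 1) + 1 = f t) (h2 : ∀ t, ¬ P t → f (t + 1) = f t) :
    ∀ a b, a ≤ b → ((Finset.Ico a b).filter P).card + f b ≤ f a := by
  intro a b hab
  induction b, hab using Nat.le_induction with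
  | base => simp
  | succ b hab ih =>
    rw [Nat.Ico_succ_right_eq_insert_Ico hab, Finset.filter_insert]
    by_cases hP : P b
    · rw [if_pos hP, Finset.card_insert_of_notMem (by simp [Finset.right_notMem_Ico])]
      have := h1 b hP
      omega
    · rw [if_neg hP]
      have := h2 b hP
      omega

lemma step_reachable {V : Type*} {G : SimpleGraph V} {z : ℕ → V}
    (hz : ∀ t, z (t + 1) = z t ∨ G.Adj (z t) (z (t + 1))) :
    ∀ a b, a ≤ b → G.Reachable (z a) (z b) := by
  intro a b hab
  induction b, hab using Nat.le_induction with
  | base => exact SimpleGraph.Reachable.refl _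
  | succ b hab ih =>
    rcases hz b with h | h
    · rwa [h]
    · exact ih.trans h.reachable

lemma step_walk {V : Type*} {G : SimpleGraph V} {z : ℕ → V}
    (hz : ∀ t, z (t + 1) = z t ∨ G.Adj (z t) (z (t + 1))) :
    ∀ a b, a ≤ b → ∃ p : G.Walk (z a) (z b), p.length + a ≤ b := by
  intro a b hab
  induction b, hab using Nat.le_induction with
  | base => exact ⟨SimpleGraph.Walk.nil, by simp⟩
  | succ b hab ih =>
    obtain ⟨p, hp⟩ := ih
    rcases hz b with h | h
    · exact ⟨p.copy rfl h.symm, by rw [SimpleGraph.Walk.length_copy]; omega⟩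
    · refine ⟨p.concat h, ?_⟩
      rw [SimpleGraph.Walk.length_concat]; omega

lemma step_dist_le {V : Type*} {G : SimpleGraph V} {z : ℕ → V}
    (hz : ∀ t, z (t + 1) = z t ∨ G.Adj (z t) (z (t + 1))) :
    ∀ a b, a ≤ b → G.dist (z a) (z b) ≤ b - a := by
  intro a b hab
  obtain ⟨p, hp⟩ := step_walk hz a b hab
  have := SimpleGraph.dist_le p
  omega

lemma exists_adj_toward {V : Type*} {G : SimpleGraph V} {u s : V}
    (hr : G.Reachable u s) (hne : u ≠ s) :
    ∃ v, G.Adj u v ∧ G.dist v s + 1 = G.dist u s := by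
  obtain ⟨p, hp⟩ := hr.exists_walk_length_eq_dist
  cases p with
  | nil => exact absurd rfl hne
  | @cons _ v _ hadj q =>
    refine ⟨v, hadj, ?_⟩
    have h1 : G.dist v s ≤ q.length := SimpleGraph.dist_le q
    have h2 : q.length + 1 = G.dist u s := by simpa using hp
    obtain ⟨q', hq'⟩ := q.reachable.exists_walk_length_eq_dist
    have h3 : G.dist u s ≤ G.dist v s + 1 := by
      have := SimpleGraph.dist_le (SimpleGraph.Walk.cons hadj q')
      simp only [SimpleGraph.Walk.length_cons, hq'] at this
      omega
    omega

end Aux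

open WGPInstance in
/-- FIFO is an `O(m)`-approximation for F-WGP: for every WGP instance with `m` packets,
every schedule `x` produced by FIFO and every feasible schedule `y` (with flow times
`F*`), `max_j F_j ≤ (1 + (γ/γ₀)·m) · max_j F*_j`, where `γ = d_I + 2` and
`γ₀ = ⌊(d_I+1)/2⌋`. -/
theorem fifo_flow_approx {V J : Type*} [Fintype J]
    (I : WGPInstance V J) (hdI : 1 ≤ I.dI)
    (x : J → ℕ → V) (hx : I.Feasible x) (hfifo : I.FIFO x)
    (y : J → ℕ → V) (hy : I.Feasible y) :
    ((Finset.univ.sup (I.flow x) : ℕ) : ℚ) ≤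
      (1 + (I.dI + 2 : ℚ) / ((I.dI + 1) / 2 : ℕ) * (Fintype.card J : ℚ)) *
        ((Finset.univ.sup (I.flow y) : ℕ) : ℚ) := by
  classical
  obtain ⟨hx1, hx2, hx3, hx4⟩ := hx
  obtain ⟨hy1, hy2, hy3, hy4⟩ := hy
  obtain ⟨prio, hprioFifo, hinj, hsink, hmove, hblock⟩ := hfifo
  set Fopt : ℕ := Finset.univ.sup (I.flow y) with hFopt
  -- nonemptiness of the completion sets
  have hne : ∀ (z : J → ℕ → V), (∀ j t, t ≤ I.r j → z j t = I.o j) →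
      (∀ j, ∃ t, z j t = I.s) → ∀ j, {t | I.r j ≤ t ∧ z j t = I.s}.Nonempty := by
    intro z hz1 hz4 j
    obtain ⟨t, ht⟩ := hz4 j
    by_cases h : I.r j ≤ t
    · exact ⟨t, h, ht⟩
    · refine ⟨I.r j, le_refl _, ?_⟩
      rw [hz1 j (I.r j) (le_refl _), ← hz1 j t (by omega)]
      exact ht
  -- Step A : dist (o k) s ≤ flow y k
  have stepA : ∀ k, I.G.dist (I.o k) I.s ≤ I.flow y k := by
    intro k
    have hmem := Nat.sInf_mem (hne y hy1 hy4 k)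
    obtain ⟨hC1, hC2⟩ := hmem
    have := step_dist_le (G := I.G) (z := y k) (fun t => hy2 k t) (I.r k) _ hC1
    rw [hy1 k (I.r k) (le_refl _), hC2] at this
    exact this
  -- dist (o k) s ≤ Fopt
  have hdistFopt : ∀ k, I.G.dist (I.o k) I.s ≤ Fopt :=
    fun k => le_trans (stepA k) (Finset.le_sup (Finset.mem_univ k))
  -- Step B : flow x j ≤ ∑ k, dist (o k) s
  have stepB : ∀ j, I.flow x j ≤ ∑ k : J, I.G.dist (I.o k) I.s := by
    intro j
    set C := I.completion x j with hCdef
    set R := I.r j with hRdef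
    have hmem := Nat.sInf_mem (hne x hx1 hx4 j)
    obtain ⟨hC1, hC2⟩ := hmem
    have hC1 : R ≤ C := hC1
    have hC2 : x j C = I.s := hC2
    set f : J → ℕ → ℕ := fun k t => I.G.dist (x k t) I.s with hf
    have h1 : ∀ k t, x k (t + 1) ≠ x k t → f k (t + 1) + 1 = f k t := by
      intro k t h
      exact (hmove k t h).2
    have h2 : ∀ k t, ¬ x k (t + 1) ≠ x k t → f k (t + 1) = f k t := by
      intro k t h
      rw [not_not] at h
      simp [hf, h]
    have hf0 : ∀ k, f k 0 = I.G.dist (I.o k) I.s := by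
      intro k; simp [hf, hx1 k 0 (Nat.zero_le _)]
    -- moves of any packet in any window [a,b) are at most dist (o k) s
    have hmovecount : ∀ k a b, a ≤ b →
        ((Finset.Ico a b).filter (fun t => x k (t + 1) ≠ x k t)).card ≤
          I.G.dist (I.o k) I.s := by
      intro k a b hab
      have hab' := count_drops (h1 k) (h2 k) a b hab
      have h0a := count_drops (h1 k) (h2 k) 0 a (Nat.zero_le _)
      rw [hf0 k] at h0a
      omega
    -- blocked rounds : some higher-priority packet moves
    have hblocked : ∀ t, t ∈ Finset.Ico R C → ¬ x j (t + 1) ≠ x j t →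
        ∃ k, k ≠ j ∧ x k (t + 1) ≠ x k t := by
      intro t ht hstay
      rw [not_not] at hstay
      rw [Finset.mem_Ico] at ht
      have hactive : I.Active x j t := by
        refine ⟨ht.1, ?_⟩
        have := Nat.notMem_of_lt_sInf (ht.2 : t < C)
        simp only [Set.mem_setOf_eq, not_and] at this
        exact this ht.1
      have hreach : I.G.Reachable (x j t) I.s := by
        have := step_reachable (G := I.G) (z := x j) (fun t => hx2 j t) t C (le_of_lt ht.2)
        rwa [hC2] at this
      obtain ⟨v, hadj, hv⟩ := exists_adj_toward hreach hactive.2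
      obtain ⟨k, hk1, hk2, _⟩ := hblock j t hactive hstay v hadj hv
      exact ⟨k, fun h => absurd (h ▸ hk1) (lt_irrefl _), hk2⟩
    -- counting
    set Mv := (Finset.Ico R C).filter (fun t => x j (t + 1) ≠ x j t) with hMv
    set Bl := (Finset.Ico R C).filter (fun t => ¬ x j (t + 1) ≠ x j t) with hBl
    have hsplit : Mv.card + Bl.card = C - R := by
      rw [hMv, hBl, Finset.card_filter_add_card_filter_not, Nat.card_Ico]
    have hMvle : Mv.card ≤ I.G.dist (I.o j) I.s := hmovecount j R C hC1
    have hBlle : Bl.card ≤ ∑ k ∈ Finset.univ.erase j, I.G.dist (I.o k) I.s := by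
      have hsub : Bl ⊆ (Finset.univ.erase j).biUnion
          (fun k => (Finset.Ico R C).filter (fun t => x k (t + 1) ≠ x k t)) := by
        intro t ht
        rw [hBl, Finset.mem_filter] at ht
        obtain ⟨k, hk1, hk2⟩ := hblocked t ht.1 ht.2
        rw [Finset.mem_biUnion]
        exact ⟨k, Finset.mem_erase.mpr ⟨hk1, Finset.mem_univ k⟩,
          Finset.mem_filter.mpr ⟨ht.1, hk2⟩⟩
      calc Bl.card ≤ _ := Finset.card_le_card hsub
        _ ≤ ∑ k ∈ Finset.univ.erase j,
            ((Finset.Ico R C).filter (fun t => x k (t + 1) ≠ x k t)).card :=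
          Finset.card_biUnion_le
        _ ≤ ∑ k ∈ Finset.univ.erase j, I.G.dist (I.o k) I.s :=
          Finset.sum_le_sum (fun k _ => hmovecount k R C hC1)
    have hflow : I.flow x j = C - R := rfl
    rw [hflow, ← Finset.add_sum_erase Finset.univ _ (Finset.mem_univ j)]
    omega
  -- Step C : combine
  have stepC : ∀ j, I.flow x j ≤ Fintype.card J * Fopt := by
    intro j
    calc I.flow x j ≤ ∑ k : J, I.G.dist (I.o k) I.s := stepB j
      _ ≤ ∑ _k : J, Fopt := Finset.sum_le_sum (fun k _ => hdistFopt k)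
      _ = Fintype.card J * Fopt := by
        rw [Finset.sum_const, smul_eq_mul, Finset.card_univ]
  have hsup : Finset.univ.sup (I.flow x) ≤ Fintype.card J * Fopt :=
    Finset.sup_le (fun j _ => stepC j)
  -- final rational arithmetic
  set m : ℕ := Fintype.card J with hm
  set g0 : ℕ := (I.dI + 1) / 2 with hg0
  have hg0pos : 1 ≤ g0 := by rw [hg0]; omega
  have hg0le : g0 ≤ I.dI + 2 := by rw [hg0]; omega
  have hFx : ((Finset.univ.sup (I.flow x) : ℕ) : ℚ) ≤ (m : ℚ) * (Fopt : ℚ) := by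
    exact_mod_cast Nat.cast_le.mpr hsup
  have hg0Q : (1 : ℚ) ≤ g0 := by exact_mod_cast hg0pos
  have hg0leQ : (g0 : ℚ) ≤ (I.dI : ℚ) + 2 := by exact_mod_cast hg0le
  have hdiv : (1 : ℚ) ≤ ((I.dI : ℚ) + 2) / (g0 : ℚ) :=
    (one_le_div (by linarith)).mpr hg0leQ
  have hFoptpos : (0 : ℚ) ≤ (Fopt : ℚ) := Nat.cast_nonneg _
  have hmpos : (0 : ℚ) ≤ (m : ℚ) := Nat.cast_nonneg _
  calc ((Finset.univ.sup (I.flow x) : ℕ) : ℚ) ≤ (m : ℚ) * (Fopt : ℚ) := hFx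
    _ ≤ (1 + ((I.dI : ℚ) + 2) / (g0 : ℚ) * (m : ℚ)) * (Fopt : ℚ) := by
        apply mul_le_mul_of_nonneg_right _ hFoptpos
        nlinarith
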